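/- In every finite sequential game, a strategy profile is terminal for the {I,L}-dynamics if and only if it is a Strong Nash Equilibrium in the sense of Aumann. -/

import Mathlib

namespace SeqGame

inductive GameTree (N O : Type) : Type where
  | leaf (o : O) : GameTree N O
  | node (i : N) (children : List (GameTree N O)) : GameTree N O

namespace GameTree

variable {N O : Type}

/-- The subtree of `T` at position `p` (a list of child indices), if it exists. -/
def subtree : GameTree N O → List ℕ → Option (GameTree N O)
  | t, [] => some t
  | leaf _, _ :: _ => none
  | node _ c, k :: p =>
    match getElem? c k with
    | some t => subtree t p
    | none => none

/-- A strategy profile: a choice of a child index at every position. -/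
abbrev Profile := List ℕ → ℕ

/-- A profile is legal if it chooses an existing child at every internal node. -/
def Legal (T : GameTree N O) (s : Profile) : Prop :=
  ∀ p i c, T.subtree p = some (node i c) → s p < c.length

/-- The profiles `s` and `s'` differ at the (valid, internal) node `p`. -/
def Differs (T : GameTree N O) (s s' : Profile) (p : List ℕ) : Prop :=
  (∃ i c, T.subtree p = some (node i c)) ∧ s p ≠ s' p

/-- The outcome reached when playing according to the profile `s`. -/
def outcome : GameTree N O → Profile → Option O
  | leaf o, _ => some o
  | node _ c, s =>
    match h : getElem? c (s []) with
    | some t => outcome t (fun p => s (s [] :: p))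
    | none => none
decreasing_by
  have hm : t ∈ c := by
    exact List.mem_of_getElem? h
  have := List.sizeOf_lt_of_mem hm
  simp only [node.sizeOf_spec]
  omega

/-- The profile `s` re-rooted at position `p`. -/
def shift (s : Profile) (p : List ℕ) : Profile := fun q => s (p ++ q)

/-- The owner of the node at position `p`, if it is internal. -/
def ownerAt (T : GameTree N O) (p : List ℕ) : Option N :=
  match T.subtree p with
  | some (node i _) => some i
  | _ => none

/-- `p` lies along the play induced by `s`. -/
def OnPlay (s : Profile) (p : List ℕ) : Prop :=
  ∀ q k, (q ++ [k]) <+: p → s q = k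

/-- Improvement property: every player who changes strictly improves the outcome. -/
def Iprop (T : GameTree N O) (pref : N → O → O → Prop) (s s' : Profile) : Prop :=
  ∀ p i c, T.subtree p = some (node i c) → s p ≠ s' p →
    ∃ x y, T.outcome s = some x ∧ T.outcome s' = some y ∧ pref i x y

/-- Subgame improvement property. -/
def SIprop (T : GameTree N O) (pref : N → O → O → Prop) (s s' : Profile) : Prop :=
  ∀ p i c, T.subtree p = some (node i c) → s p ≠ s' p →
    ∃ x y, outcome (node i c) (shift s p) = some x ∧
      outcome (node i c) (shift s' p) = some y ∧ pref i x y

/-- Laziness property: all changed nodes lie along the play induced by `s'`. -/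
def Lprop (T : GameTree N O) (s s' : Profile) : Prop :=
  ∀ p, Differs T s s' p → OnPlay s' p

/-- One player property: at most one player changes his strategy. -/
def P1prop (T : GameTree N O) (s s' : Profile) : Prop :=
  ∃ i : N, ∀ p, Differs T s s' p → T.ownerAt p = some i

/-- Atomicity property: at most one node changes. -/
def Aprop (T : GameTree N O) (s s' : Profile) : Prop :=
  ∀ p q, Differs T s s' p → Differs T s s' q → p = q

/-- Names of the update properties. -/
inductive Upd : Type | I | SI | L | P1 | A
deriving DecidableEq

/-- Interpretation of an update property name. -/
def holds (T : GameTree N O) (pref : N → O → O → Prop) : Upd → Profile → Profile → Prop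
  | .I => Iprop T pref
  | .SI => SIprop T pref
  | .L => Lprop T
  | .P1 => P1prop T
  | .A => Aprop T

/-- The X-dynamics: an actual update (between legal profiles) satisfying
all properties in `X`. -/
def XDyn (X : Set Upd) (T : GameTree N O) (pref : N → O → O → Prop)
    (s s' : Profile) : Prop :=
  Legal T s ∧ Legal T s' ∧ (∃ p, Differs T s s' p) ∧ ∀ u ∈ X, holds T pref u s s'

/-- A dynamics terminates iff there is no infinite update sequence. -/
def Terminates (D : Profile → Profile → Prop) : Prop :=
  ¬ ∃ f : ℕ → Profile, ∀ n, D (f n) (f (n + 1))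

/-- `s'` is a deviation from `s` by the coalition `I`. -/
def Deviation (T : GameTree N O) (I : Set N) (s s' : Profile) : Prop :=
  Legal T s' ∧ ∀ p i c, T.subtree p = some (node i c) → i ∉ I → s p = s' p

/-- Nash equilibrium. -/
def IsNE (T : GameTree N O) (pref : N → O → O → Prop) (s : Profile) : Prop :=
  ∀ i s', Deviation T {i} s s' →
    ∀ x y, T.outcome s = some x → T.outcome s' = some y → ¬ pref i x y

/-- Subgame perfect equilibrium: an NE in every subgame. -/
def IsSPE (T : GameTree N O) (pref : N → O → O → Prop) (s : Profile) : Prop :=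
  ∀ p t, T.subtree p = some t → IsNE t pref (shift s p)

/-- Strong Nash equilibrium (Aumann). -/
def IsSNE (T : GameTree N O) (pref : N → O → O → Prop) (s : Profile) : Prop :=
  ∀ I : Set N, I.Nonempty → ∀ s', Deviation T I s s' →
    ∃ i ∈ I, ∀ x y, T.outcome s = some x → T.outcome s' = some y → ¬ pref i x y

/-- A relation is acyclic if it has no cycle. -/
def Acyclic (r : O → O → Prop) : Prop := ∀ x, ¬ Relation.TransGen r x x

/-- Incomparability. -/
def Incomp (r : O → O → Prop) (x y : O) : Prop := ¬ r x y ∧ ¬ r y x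

/-- Strict weak order: irreflexive, transitive, with transitive incomparability. -/
def IsSWO (r : O → O → Prop) : Prop :=
  (∀ x, ¬ r x x) ∧ (∀ x y z, r x y → r y z → r x z) ∧
    (∀ x y z, Incomp r x y → Incomp r y z → Incomp r x z)

/-- Strict linear order: irreflexive, transitive and total. -/
def IsSLO (r : O → O → Prop) : Prop :=
  (∀ x, ¬ r x x) ∧ (∀ x y z, r x y → r y z → r x z) ∧
    (∀ x y, x ≠ y → r x y ∨ r y x)

/-- Absence of the main pattern. -/
def OutOfMainPattern (pref : N → O → O → Prop) : Prop :=
  ∀ (i j : N) (x y z : O),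
    ¬ (pref i x y ∧ pref i y z ∧ pref j y z ∧ pref j z x)

/-- Absence of the secondary pattern. -/
def OutOfSecondaryPattern (pref : N → O → O → Prop) : Prop :=
  ∀ (i j : N) (w x y z : O),
    ¬ (pref i w x ∧ pref i x y ∧ pref i y z ∧
       Incomp (pref j) x z ∧ pref j z w ∧ Incomp (pref j) w y)

/-- Absence of both patterns. -/
def OutOfPattern (pref : N → O → O → Prop) : Prop :=
  OutOfMainPattern pref ∧ OutOfSecondaryPattern pref

/-- The preferences can be layered: there is an ordered partition of the
outcomes (given by a layer-index function) such that higher layers are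
unanimously weakly preferred, and within a layer no two players agree on
one pair while disagreeing on another pair. -/
def CanBeLayered (pref : N → O → O → Prop) : Prop :=
  ∃ ℓ : O → ℕ,
    (∀ x y, ℓ x < ℓ y → ∀ i, ¬ pref i y x) ∧
    (∀ (i j : N) (w x y z : O), ℓ w = ℓ x → ℓ x = ℓ y → ℓ y = ℓ z →
      ¬ (pref i x y ∧ pref j x y ∧ pref i w z ∧ pref j z w))

-- Auxiliary lemmas
lemma subtree_cons {i : N} {c : List (GameTree N O)} {k : ℕ} {t : GameTree N O}
    (h : getElem? c k = some t) (p : List ℕ) :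
    subtree (node i c) (k :: p) = subtree t p := by
  simp only [subtree]
  rw [h]

lemma legal_shift {i : N} {c : List (GameTree N O)} {k : ℕ} {t : GameTree N O}
    (h : getElem? c k = some t) {s : Profile} (hs : Legal (node i c) s) :
    Legal t (fun p => s (k :: p)) := by
  intro p j d hp
  exact hs (k :: p) j d (by rw [subtree_cons h]; exact hp)

lemma outcome_node {i : N} {c : List (GameTree N O)} {s : Profile} {t : GameTree N O}
    (ht : getElem? c (s []) = some t) :
    outcome (node i c) s = outcome t (fun p => s (s [] :: p)) := by
  rw [outcome]
  split
  · rename_i t' h'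
    rw [ht] at h'; cases h'; rfl
  · rename_i h'
    rw [ht] at h'; cases h'

lemma outcome_node_none {i : N} {c : List (GameTree N O)} {s : Profile}
    (ht : getElem? c (s []) = none) :
    outcome (node i c) s = none := by
  rw [outcome]
  split
  · rename_i t' h'
    rw [ht] at h'; cases h'
  · rfl

lemma outcome_leaf (o : O) (s : Profile) : outcome (leaf o : GameTree N O) s = some o := by
  rw [outcome]

lemma outcome_some : ∀ (T : GameTree N O) (s : Profile), Legal T s → ∃ x, T.outcome s = some x
  | leaf o, s', _ => ⟨o, outcome_leaf o s'⟩
  | node i c, s, hs => by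
    have hl : s [] < c.length := hs [] i c rfl
    have ht : getElem? c (s []) = some (c.get ⟨s [], hl⟩) := List.getElem?_eq_getElem hl
    rw [outcome_node ht]
    exact outcome_some _ _ (legal_shift ht hs)
decreasing_by
  have hm : c.get ⟨s [], hl⟩ ∈ c := List.mem_of_getElem? ht
  have := List.sizeOf_lt_of_mem hm
  simp only [node.sizeOf_spec]
  omega

lemma outcome_congr_valid : ∀ (T : GameTree N O) (s1 s2 : Profile),
    (∀ p i c, T.subtree p = some (node i c) → s1 p = s2 p) →
    T.outcome s1 = T.outcome s2
  | leaf o, s1, s2, _ => by rw [outcome_leaf, outcome_leaf]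
  | node i c, s1, s2, h => by
    have h0 : s1 [] = s2 [] := h [] i c rfl
    cases ht : getElem? c (s1 []) with
    | none =>
      rw [outcome_node_none ht, outcome_node_none (by rw [← h0]; exact ht)]
    | some t =>
      rw [outcome_node ht, outcome_node (show getElem? c (s2 []) = some t by rw [← h0]; exact ht)]
      rw [← h0]
      exact outcome_congr_valid t _ _ (fun p j d hp => h (s1 [] :: p) j d (by rw [subtree_cons ht]; exact hp))
decreasing_by
  have hm : t ∈ c := List.mem_of_getElem? ht
  have := List.sizeOf_lt_of_mem hm
  simp only [node.sizeOf_spec]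
  omega

lemma onplay_nil (s : Profile) : OnPlay s ([] : List ℕ) := by
  intro q k h
  have := h.length_le
  simp at this

lemma onplay_prefix {s : Profile} {p q : List ℕ} (h : OnPlay s p) (hq : q <+: p) :
    OnPlay s q :=
  fun r k hr => h r k (hr.trans hq)

lemma onplay_shift {s : Profile} :
    ∀ q, OnPlay (fun r => s (s [] :: r)) q → OnPlay s (s [] :: q) := by
  intro q hq r k hr
  match r with
  | [] =>
    simp only [List.nil_append] at hr
    obtain ⟨l, hl⟩ := hr
    cases hl; rfl
  | a :: r' =>
    have : a = s [] ∧ (r' ++ [k]) <+: q := by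
      rw [List.cons_append] at hr
      exact List.cons_prefix_cons.mp hr
    obtain ⟨rfl, hr'⟩ := this
    exact hq r' k hr'

lemma outcome_congr_play : ∀ (T : GameTree N O) (s1 s2 : Profile),
    (∀ p, OnPlay s1 p → s1 p = s2 p) →
    T.outcome s1 = T.outcome s2
  | leaf o, s1, s2, _ => by rw [outcome_leaf, outcome_leaf]
  | node i c, s1, s2, h => by
    have h0 : s1 [] = s2 [] := h [] (onplay_nil s1)
    cases ht : getElem? c (s1 []) with
    | none => rw [outcome_node_none ht, outcome_node_none (by rw [← h0]; exact ht)]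
    | some t =>
      rw [outcome_node ht, outcome_node (show getElem? c (s2 []) = some t by rw [← h0]; exact ht)]
      rw [← h0]
      exact outcome_congr_play t _ _ (fun p hp => h (s1 [] :: p) (onplay_shift p hp))
decreasing_by
  have hm : t ∈ c := List.mem_of_getElem? ht
  have := List.sizeOf_lt_of_mem hm
  simp only [node.sizeOf_spec]
  omega

open Classical in
noncomputable def lazify (s s' : Profile) : Profile :=
  fun p => if OnPlay s' p then s' p else s p

lemma lazify_of_onplay {s s' : Profile} {p : List ℕ} (h : OnPlay s' p) :
    lazify s s' p = s' p := by
  rw [lazify, if_pos h]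

lemma lazify_of_not_onplay {s s' : Profile} {p : List ℕ} (h : ¬ OnPlay s' p) :
    lazify s s' p = s p := by
  rw [lazify, if_neg h]

lemma onplay_of_lazify {s s' : Profile} :
    ∀ n (p : List ℕ), p.length ≤ n → OnPlay (lazify s s') p → OnPlay s' p := by
  intro n
  induction n with
  | zero =>
    intro p hp h q k hq
    have h1 := hq.length_le
    simp at h1
    omega
  | succ n ih =>
    intro p hp h q k hq
    have hql : q.length + 1 ≤ p.length := by simpa using hq.length_le
    have hq' : q <+: p := (List.prefix_append q [k]).trans hq
    have h1 : OnPlay (lazify s s') q := onplay_prefix h hq'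
    have h2 : OnPlay s' q := ih q (by omega) h1
    have h3 := h q k hq
    rwa [lazify_of_onplay h2] at h3

lemma lazify_onplay_iff (s s' : Profile) (p : List ℕ) :
    OnPlay (lazify s s') p ↔ OnPlay s' p := by
  constructor
  · exact onplay_of_lazify p.length p le_rfl
  · intro h q k hq
    have h2 : OnPlay s' q := onplay_prefix h ((List.prefix_append q [k]).trans hq)
    rw [lazify_of_onplay h2]
    exact h q k hq

lemma outcome_lazify (T : GameTree N O) (s s' : Profile) :
    T.outcome (lazify s s') = T.outcome s' :=
  outcome_congr_play T _ _ (fun p hp =>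
    lazify_of_onplay ((lazify_onplay_iff s s' p).mp hp))

end GameTree
end SeqGame

open SeqGame GameTree in
/-- A profile is terminal for the {I,L}-dynamics iff it is a strong Nash
equilibrium in the sense of Aumann. -/
theorem stmt_10 {N O : Type} (T : GameTree N O) (pref : N → O → O → Prop)
    (hirr : ∀ i x, ¬ pref i x x) (s : Profile) (hs : Legal T s) :
    (∀ s', ¬ XDyn {Upd.I, Upd.L} T pref s s') ↔ IsSNE T pref s := by
  constructor
  · -- terminal → SNE
    intro hterm I hI s' hdev
    by_contra hno
    push_neg at hno
    obtain ⟨x, hx⟩ := outcome_some T s hs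
    obtain ⟨y, hy⟩ := outcome_some T s' hdev.1
    have hall : ∀ i ∈ I, pref i x y := by
      intro i hi
      obtain ⟨x', y', hx', hy', hp⟩ := hno i hi
      rw [hx] at hx'; rw [hy] at hy'
      cases hx'; cases hy'
      exact hp
    set s'' := lazify s s' with hs''
    have hy'' : T.outcome s'' = some y := by rw [hs'', outcome_lazify]; exact hy
    -- legality of s''
    have hleg'' : Legal T s'' := by
      intro p i c hp
      rw [hs'']
      by_cases h : OnPlay s' p
      · rw [lazify_of_onplay h]; exact hdev.1 p i c hp
      · rw [lazify_of_not_onplay h]; exact hs p i c hp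
    -- key: differing nodes
    have hdiff : ∀ p, s p ≠ s'' p → OnPlay s' p ∧ s p ≠ s' p := by
      intro p hne
      by_cases h : OnPlay s' p
      · refine ⟨h, ?_⟩
        rw [hs'', lazify_of_onplay h] at hne
        exact hne
      · exact absurd (by rw [hs'', lazify_of_not_onplay h]) hne
    refine hterm s'' ⟨hs, hleg'', ?_, ?_⟩
    · -- ∃ p, Differs T s s'' p
      by_contra hnone
      push_neg at hnone
      have heq : T.outcome s = T.outcome s'' := by
        refine outcome_congr_valid T s s'' (fun p i c hp => ?_)
        by_contra hne
        exact hnone p ⟨⟨i, c, hp⟩, hne⟩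
      rw [hx, hy''] at heq
      cases heq
      obtain ⟨i0, hi0⟩ := hI
      exact hirr i0 x (hall i0 hi0)
    · intro u hu
      simp only [Set.mem_insert_iff, Set.mem_singleton_iff] at hu
      rcases hu with rfl | rfl
      · -- Iprop
        intro p i c hp hne
        obtain ⟨hop, hne'⟩ := hdiff p hne
        have hiI : i ∈ I := by
          by_contra hni
          exact hne' (hdev.2 p i c hp hni)
        exact ⟨x, y, hx, hy'', hall i hiI⟩
      · -- Lprop
        intro p ⟨_, hne⟩
        rw [hs'', lazify_onplay_iff]
        exact (hdiff p hne).1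
  · -- SNE → terminal
    intro hsne s' hdyn
    obtain ⟨hls, hls', ⟨p0, ⟨⟨i0, c0, hp0⟩, hne0⟩⟩, hprops⟩ := hdyn
    have hI : Iprop T pref s s' := hprops Upd.I (Or.inl rfl)
    set I : Set N := {i | ∃ p c, T.subtree p = some (node i c) ∧ s p ≠ s' p} with hIdef
    have hdev : Deviation T I s s' := by
      refine ⟨hls', fun p i c hp hni => ?_⟩
      by_contra hne
      exact hni ⟨p, c, hp, hne⟩
    obtain ⟨i, hiI, hno⟩ := hsne I ⟨i0, p0, c0, hp0, hne0⟩ s' hdev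
    obtain ⟨p, c, hp, hne⟩ := hiI
    obtain ⟨x, y, hx, hy, hpref⟩ := hI p i c hp hne
    exact hno x y hx hy hpref
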